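/- arXiv:1303.3703 — 3 statements merged into one kernel-verified Lean document; each statement's English description precedes it below -/
import Mathlib

section
/- Let w ∈ (Γ_+)^n and F = (f_1,…,f_n) ∈ Aut_k k[x_1,…,x_n] be such that w_1 ≤ ⋯ ≤ w_n and deg_w f_1 ≤ ⋯ ≤ deg_w f_n. Then deg_w f_i ≥ w_i for i = 1,…,n. -/
open MvPolynomial

noncomputable section

/-- `F` is an elementary automorphism of `k[x_1,…,x_n]`. -/
def IsElementary {k : Type*} [Field k] {n : ℕ}
    (F : MvPolynomial (Fin n) k ≃ₐ[k] MvPolynomial (Fin n) k) : Prop :=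
  ∃ (l : Fin n) (a : k), a ≠ 0 ∧ ∃ p ∈ MvPolynomial.supported k ({l}ᶜ : Set (Fin n)),
    F (X l) = C a * X l + p ∧ ∀ i : Fin n, i ≠ l → F (X i) = X i

/-- The tame subgroup `T_n(k)`. -/
def tameGroup (k : Type*) [Field k] (n : ℕ) :
    Subgroup (MvPolynomial (Fin n) k ≃ₐ[k] MvPolynomial (Fin n) k) :=
  Subgroup.closure {F | IsElementary F}

/-- The `w`-degree of a polynomial, as an element of `WithBot Γ`. -/
def wdeg {k : Type*} [Field k] {Γ : Type*} [AddCommGroup Γ] [LinearOrder Γ] [IsOrderedAddMonoid Γ] {n : ℕ}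
    (w : Fin n → Γ) (f : MvPolynomial (Fin n) k) : WithBot Γ :=
  f.support.sup fun s => ((s.sum fun i e => e • w i : Γ) : WithBot Γ)

/-- The `w`-leading form `f^w` of a polynomial `f`. -/
def wlead {k : Type*} [Field k] {Γ : Type*} [AddCommGroup Γ] [LinearOrder Γ] [IsOrderedAddMonoid Γ] {n : ℕ}
    (w : Fin n → Γ) (f : MvPolynomial (Fin n) k) : MvPolynomial (Fin n) k :=
  (f.support.filter fun s =>
      ((s.sum fun i e => e • w i : Γ) : WithBot Γ) = wdeg w f).sum
    fun s => monomial s (coeff s f)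

/-- `deg_w df∧dg` for two polynomials in three variables. -/
def wedgeDeg2 {k : Type*} [Field k] {Γ : Type*} [AddCommGroup Γ] [LinearOrder Γ] [IsOrderedAddMonoid Γ]
    (w : Fin 3 → Γ) (f g : MvPolynomial (Fin 3) k) : WithBot Γ :=
  max (max
    (wdeg w ((pderiv 0 f * pderiv 1 g - pderiv 1 f * pderiv 0 g) * X 0 * X 1))
    (wdeg w ((pderiv 0 f * pderiv 2 g - pderiv 2 f * pderiv 0 g) * X 0 * X 2)))
    (wdeg w ((pderiv 1 f * pderiv 2 g - pderiv 2 f * pderiv 1 g) * X 1 * X 2))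

/-- The set of values `deg_w df_1∧df_2` over all tame `F` with `deg_w f_1 = d`,
`deg_w f_2 = e`; `Δ_w(d,e)` is its minimum (`∞` for the empty set). -/
def deltaSet (k : Type*) [Field k] {Γ : Type*} [AddCommGroup Γ] [LinearOrder Γ] [IsOrderedAddMonoid Γ]
    (w : Fin 3 → Γ) (d e : Γ) : Set (WithBot Γ) :=
  { δ | ∃ F ∈ tameGroup k 3, wdeg w (F (X 0)) = (d : WithBot Γ) ∧
      wdeg w (F (X 1)) = (e : WithBot Γ) ∧ wedgeDeg2 w (F (X 0)) (F (X 1)) = δ }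

/-- `s = |w|_*` for a weight `w` on three variables. -/
def IsWStar3 {Γ : Type*} [AddCommGroup Γ] [LinearOrder Γ] [IsOrderedAddMonoid Γ] (w : Fin 3 → Γ) (s : Γ) : Prop :=
  ∃ σ : Equiv.Perm (Fin 3), w (σ 0) ≤ w (σ 1) ∧ w (σ 1) ≤ w (σ 2) ∧
    IsLeast ({γ : Γ | (∃ u v : ℕ, 0 < u ∧ 0 < v ∧ γ = u • w (σ 0) + v • w (σ 1)) ∧
      w (σ 0) + w (σ 2) < γ} ∪ {2 • w (σ 0) + w (σ 2)}) s

/-- The order embedding of `Fin (n-1)` into `Fin n` skipping `i`. -/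
def skipIdx {n : ℕ} (i : Fin n) (m : Fin (n - 1)) : Fin n :=
  if m.val < i.val then ⟨m.val, by have := m.isLt; omega⟩
  else ⟨m.val + 1, by have := m.isLt; omega⟩

/-- The `i`-th Jacobian minor of `n-1` polynomials in `n` variables. -/
def jacMinor {k : Type*} [Field k] {n : ℕ}
    (f : Fin (n - 1) → MvPolynomial (Fin n) k) (i : Fin n) : MvPolynomial (Fin n) k :=
  (Matrix.of fun j m : Fin (n - 1) => pderiv (skipIdx i m) (f j)).det

/-- `deg_w df_1∧⋯∧df_{n-1}`. -/
def wdegForm {k : Type*} [Field k] {Γ : Type*} [AddCommGroup Γ] [LinearOrder Γ] [IsOrderedAddMonoid Γ] {n : ℕ}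
    (w : Fin n → Γ) (f : Fin (n - 1) → MvPolynomial (Fin n) k) : WithBot Γ :=
  Finset.univ.sup fun i : Fin n =>
    wdeg w (jacMinor f i * ∏ j ∈ Finset.univ.erase i, (X j : MvPolynomial (Fin n) k))


/-- Chain rule for `pderiv` and `aeval`. -/
lemma pderiv_aeval_eq {k : Type*} [Field k] {n : ℕ}
    (g : Fin n → MvPolynomial (Fin n) k) (p : MvPolynomial (Fin n) k) (l : Fin n) :
    pderiv l (aeval g p) = ∑ t : Fin n, aeval g (pderiv t p) * pderiv l (g t) := by
  classical
  induction p using MvPolynomial.induction_on with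
  | C a => simp [aeval_C, pderiv_C]
  | add p q hp hq =>
      simp only [map_add, hp, hq, add_mul, Finset.sum_add_distrib]
  | mul_X p s hp =>
      have hrhs : ∀ t : Fin n, aeval g (pderiv t (p * X s)) * pderiv l (g t) =
          aeval g (pderiv t p) * pderiv l (g t) * g s +
            (if t = s then aeval g p * pderiv l (g t) else 0) := by
        intro t
        rw [pderiv_mul, map_add, map_mul, map_mul, aeval_X]
        by_cases h : t = s
        · subst h
          rw [pderiv_X_self]
          simp only [if_true, map_one, mul_one]
          ring
        · rw [pderiv_X_of_ne (Ne.symm h)]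
          simp only [h, if_false, map_zero, mul_zero, zero_mul, add_zero]
          ring
      have hsum : ∑ t : Fin n, aeval g (pderiv t (p * X s)) * pderiv l (g t)
          = ∑ t : Fin n, (aeval g (pderiv t p) * pderiv l (g t) * g s +
              (if t = s then aeval g p * pderiv l (g t) else 0)) :=
        Finset.sum_congr rfl fun t _ => hrhs t
      rw [map_mul, aeval_X, pderiv_mul, hp, hsum, Finset.sum_add_distrib,
        Finset.sum_ite_eq' Finset.univ s, Finset.sum_mul]
      simp

/-- Lemma `prop:deg F`: if `w` and the `w`-degrees of the components of an
automorphism `F` are both increasing, then `deg_w f_i ≥ w_i` for each `i`. -/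
theorem wdeg_ge_weight (k : Type*) [Field k] [CharZero k]
    {Γ : Type*} [AddCommGroup Γ] [LinearOrder Γ] [IsOrderedAddMonoid Γ] {n : ℕ}
    (w : Fin n → Γ) (hw : ∀ i, 0 < w i)
    (F : MvPolynomial (Fin n) k ≃ₐ[k] MvPolynomial (Fin n) k)
    (hwmono : ∀ i j : Fin n, i ≤ j → w i ≤ w j)
    (hfmono : ∀ i j : Fin n, i ≤ j → wdeg w (F (X i)) ≤ wdeg w (F (X j))) :
    ∀ i : Fin n, (w i : WithBot Γ) ≤ wdeg w (F (X i)) := by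
  intro i
  by_contra hcon
  have hlt : wdeg w (F (X i)) < (w i : WithBot Γ) := lt_of_not_ge hcon
  classical
  set f : Fin n → MvPolynomial (Fin n) k := fun j => F (X j) with hf
  set g : Fin n → MvPolynomial (Fin n) k := fun j => F.symm (X j) with hg
  have hvanish : ∀ j t : Fin n, j ≤ i → i ≤ t → pderiv t (f j) = 0 := by
    intro j t hji hit
    apply pderiv_eq_zero_of_notMem_vars
    intro hmem
    rw [mem_vars] at hmem
    obtain ⟨s, hs, hts⟩ := hmem
    have h1 : (w t : WithBot Γ) ≤ wdeg w (f j) := by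
      rw [wdeg]
      refine le_trans ?_ (Finset.le_sup (f := fun s => ((s.sum fun i e => e • w i : Γ) : WithBot Γ)) hs)
      rw [WithBot.coe_le_coe]
      have hterm : w t ≤ s t • w t := by
        obtain ⟨e, he⟩ := Nat.exists_eq_succ_of_ne_zero (Finsupp.mem_support_iff.mp hts)
        rw [he, succ_nsmul]
        exact le_add_of_nonneg_left (nsmul_nonneg (hw t).le e)
      refine hterm.trans ?_
      rw [Finsupp.sum]
      exact Finset.single_le_sum (fun l _ => nsmul_nonneg (hw l).le (s l)) hts
    have h2 : wdeg w (f j) ≤ wdeg w (f i) := hfmono j i hji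
    have h3 : (w i : WithBot Γ) ≤ (w t : WithBot Γ) := WithBot.coe_le_coe.mpr (hwmono i t hit)
    exact absurd (h3.trans (h1.trans h2)) (not_le_of_gt hlt)
  set A : Matrix (Fin n) (Fin n) (MvPolynomial (Fin n) k) :=
    fun j t => aeval g (pderiv t (f j)) with hA
  set B : Matrix (Fin n) (Fin n) (MvPolynomial (Fin n) k) :=
    fun t l => pderiv l (g t) with hB
  have haeval : ∀ p : MvPolynomial (Fin n) k, aeval g p = F.symm p := by
    intro p
    have h := (MvPolynomial.aeval_unique (F.symm : MvPolynomial (Fin n) k →ₐ[k] MvPolynomial (Fin n) k)).symm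
    exact congrFun (congrArg (fun φ : MvPolynomial (Fin n) k →ₐ[k] MvPolynomial (Fin n) k => (φ : MvPolynomial (Fin n) k → MvPolynomial (Fin n) k)) h) p
  have hAB : A * B = 1 := by
    ext j l
    rw [Matrix.mul_apply]
    have hsum : ∑ t, A j t * B t l = pderiv l (aeval g (f j)) :=
      (pderiv_aeval_eq g (f j) l).symm
    rw [hsum, haeval, hf]
    simp only [AlgEquiv.symm_apply_apply]
    rw [Matrix.one_apply, pderiv_X, Pi.single_apply]
  have hdetA : A.det = 0 := by
    rw [Matrix.det_apply]
    apply Finset.sum_eq_zero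
    intro σ _
    have hex : ∃ t : Fin n, i ≤ t ∧ σ t ≤ i := by
      by_contra hc
      push_neg at hc
      set T := Finset.univ.filter (fun t : Fin n => i ≤ t) with hT
      set T' := Finset.univ.filter (fun t : Fin n => i < t) with hT'
      have h1 : T.card ≤ T'.card := by
        refine Finset.card_le_card_of_injOn σ (fun t ht => ?_) (σ.injective.injOn)
        simp only [hT, hT', Finset.coe_filter, Finset.mem_coe, Finset.mem_filter, Finset.mem_univ, true_and, Set.mem_setOf_eq] at ht ⊢
        exact hc t ht
      have hsub : T' ⊆ T := by
        intro t ht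
        simp only [hT, hT', Finset.mem_filter, Finset.mem_univ, true_and] at ht ⊢
        exact le_of_lt ht
      have h2 : T' ⊂ T :=
        (Finset.ssubset_iff_of_subset hsub).mpr ⟨i, by simp [hT], by simp [hT']⟩
      exact absurd h1 (not_le_of_gt (Finset.card_lt_card h2))
    obtain ⟨t, hit, hσt⟩ := hex
    have hz : A (σ t) t = 0 := by
      rw [hA]
      simp only [hvanish (σ t) t hσt hit, map_zero]
    have hprod : ∏ x : Fin n, A (σ x) x = 0 := Finset.prod_eq_zero (Finset.mem_univ t) hz
    rw [hprod, smul_zero]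
  have hone : (1 : MvPolynomial (Fin n) k) = 0 := by
    have h := congrArg Matrix.det hAB
    rw [Matrix.det_mul, hdetA, zero_mul, Matrix.det_one] at h
    exact h.symm
  exact one_ne_zero hone
end
end

section
/- Let n ≥ 3 and let w ∈ (Γ_+)^n be such that w_1 ≤ ⋯ ≤ w_n. Let f_1,…,f_{n−1} ∈ k[x_1,…,x_n] be algebraically independent over k, and let h_1,…,h_n be the Jacobian minors of (f_1,…,f_{n−1}). If deg_w df_1∧⋯∧df_{n−1} < |w|_*, then h_1,…,h_{n−1} are constants (elements of k), h_n belongs to k[x_1,…,x_{n−1}], and deg_w h_n ≤ w_n − w_{n−1}. -/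
open MvPolynomial

noncomputable section

namespace LemHiAux

variable {k : Type*} [Field k] {Γ : Type*} [AddCommGroup Γ] [LinearOrder Γ] [IsOrderedAddMonoid Γ] {n : ℕ}

lemma prod_X_eq (A : Finset (Fin n)) :
    (∏ j ∈ A, (X j : MvPolynomial (Fin n) k)) =
      monomial (∑ j ∈ A, Finsupp.single j 1) (1 : k) := by
  classical
  induction A using Finset.induction_on with
  | empty => simp [MvPolynomial.monomial_zero']
  | insert _ _ h ih =>
      rw [Finset.prod_insert h, Finset.sum_insert h, ih, X, monomial_mul, one_mul]

lemma weight_sum_single (w : Fin n → Γ) (A : Finset (Fin n)) :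
    Finsupp.weight w (∑ j ∈ A, Finsupp.single j 1) = ∑ j ∈ A, w j := by
  rw [map_sum]
  refine Finset.sum_congr rfl fun j _ => ?_
  rw [Finsupp.weight_apply, Finsupp.sum_single_index (zero_smul ℕ (w j)), one_smul]

lemma key (w : Fin n → Γ) (g : MvPolynomial (Fin n) k) (i : Fin n) (B : Γ)
    (h : wdeg w (g * ∏ j ∈ Finset.univ.erase i, (X j : MvPolynomial (Fin n) k)) <
      (B : WithBot Γ))
    {s : Fin n →₀ ℕ} (hs : s ∈ g.support) :
    Finsupp.weight w s + ∑ j ∈ Finset.univ.erase i, w j < B := by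
  classical
  rw [prod_X_eq] at h
  set E := ∑ j ∈ Finset.univ.erase i, Finsupp.single j (1 : ℕ) with hE
  have hmem : s + E ∈ (g * monomial E (1 : k)).support := by
    rw [MvPolynomial.mem_support_iff, MvPolynomial.coeff_mul_monomial, mul_one]
    exact MvPolynomial.mem_support_iff.mp hs
  have hle : (((s + E).sum fun i e => e • w i : Γ) : WithBot Γ) ≤
      wdeg w (g * monomial E (1 : k)) :=
    Finset.le_sup (f := fun t : Fin n →₀ ℕ => ((t.sum fun i e => e • w i : Γ) : WithBot Γ)) hmem
  have hlt : ((s + E).sum fun i e => e • w i : Γ) < B := by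
    exact_mod_cast lt_of_le_of_lt hle h
  have h2 : Finsupp.weight w (s + E) < B := hlt
  rwa [map_add, hE, weight_sum_single] at h2

lemma le_weight (w : Fin n → Γ) (hw : ∀ i, 0 < w i) {s : Fin n →₀ ℕ} {j : Fin n}
    (hj : s j ≠ 0) : w j ≤ Finsupp.weight w s := by
  rw [Finsupp.weight_apply, Finsupp.sum]
  have hjs : j ∈ s.support := Finsupp.mem_support_iff.mpr hj
  have h1 : w j ≤ s j • w j := by
    calc w j = 1 • w j := (one_smul ℕ _).symm
    _ ≤ s j • w j := nsmul_le_nsmul_left (hw j).le (Nat.one_le_iff_ne_zero.mpr hj)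
  exact le_trans h1 (Finset.single_le_sum (fun i _ => nsmul_nonneg (hw i).le _) hjs)

lemma weight_eq_sum (w : Fin n → Γ) (s : Fin n →₀ ℕ) :
    Finsupp.weight w s = ∑ i : Fin n, s i • w i := by
  rw [Finsupp.weight_apply]
  exact Finsupp.sum_fintype _ _ (fun i => zero_smul ℕ (w i))

lemma sum_ite_smul (w : Fin n → Γ) (l : Fin n) :
    ∑ i : Fin n, (if i = l then 0 else 1 : ℕ) • w i
      = ∑ j ∈ Finset.univ.erase l, w j := by
  rw [← Finset.sum_erase_add _ _ (Finset.mem_univ l), if_pos rfl, zero_smul, add_zero]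
  refine Finset.sum_congr rfl fun j hj => ?_
  rw [if_neg (Finset.mem_erase.mp hj).1, one_smul]

lemma weight_split (w : Fin n → Γ) (s : Fin n →₀ ℕ) (l : Fin n) :
    Finsupp.weight w s + ∑ j ∈ Finset.univ.erase l, w j
      = ∑ i : Fin n, (s i + (if i = l then 0 else 1)) • w i := by
  rw [weight_eq_sum, ← sum_ite_smul w l]
  simp only [add_smul]
  rw [Finset.sum_add_distrib]

end LemHiAux

set_option maxHeartbeats 4000000

/-- Lemma `lem:h_i`: if `deg_w df_1∧⋯∧df_{n-1} < |w|_*`, then the Jacobian minors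
`h_1,…,h_{n-1}` are constants, `h_n ∈ k[x_1,…,x_{n-1}]` and
`deg_w h_n ≤ w_n − w_{n-1}`. -/
theorem lem_h_i (k : Type*) [Field k] [CharZero k]
    {Γ : Type*} [AddCommGroup Γ] [LinearOrder Γ] [IsOrderedAddMonoid Γ]
    (n : ℕ) (hn : 3 ≤ n) (w : Fin n → Γ) (hw : ∀ i, 0 < w i)
    (hmono : ∀ i j : Fin n, i ≤ j → w i ≤ w j)
    (f : Fin (n - 1) → MvPolynomial (Fin n) k)
    (hind : AlgebraicIndependent k f)
    (wstar : Γ)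
    (hstar : IsLeast ({γ : Γ |
        (∃ u : Fin n → ℕ, (∀ i : Fin n,
            (i.val < n - 1 → 0 < u i) ∧ (¬ i.val < n - 1 → u i = 0)) ∧
          γ = ∑ i, u i • w i) ∧
        (∑ i, w i) - w ⟨n - 2, by omega⟩ < γ} ∪
      {(∑ i, w i) + w ⟨0, by omega⟩ - w ⟨n - 2, by omega⟩}) wstar)
    (hdeg : wdegForm w f < (wstar : WithBot Γ)) :
    (∀ i : Fin n, i.val < n - 1 → ∃ c : k, jacMinor f i = C c) ∧
    jacMinor f ⟨n - 1, by omega⟩ ∈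
      MvPolynomial.supported k ({(⟨n - 1, by omega⟩ : Fin n)}ᶜ : Set (Fin n)) ∧
    wdeg w (jacMinor f ⟨n - 1, by omega⟩) ≤
      ((w ⟨n - 1, by omega⟩ - w ⟨n - 2, by omega⟩ : Γ) : WithBot Γ) := by
  classical
  unfold wdegForm at hdeg
  have hub : wstar ≤ (∑ i, w i) + w ⟨0, by omega⟩ - w ⟨n - 2, by omega⟩ :=
    hstar.2 (Set.mem_union_right _ (Set.mem_singleton _))
  have hkey : ∀ (i : Fin n), ∀ s ∈ (jacMinor f i).support,
      Finsupp.weight w s + ∑ j ∈ Finset.univ.erase i, w j < wstar := by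
    intro i s hs
    refine LemHiAux.key w _ i wstar ?_ hs
    exact lt_of_le_of_lt (Finset.le_sup
      (f := fun i : Fin n => wdeg w (jacMinor f i *
        ∏ j ∈ Finset.univ.erase i, (X j : MvPolynomial (Fin n) k)))
      (Finset.mem_univ i)) hdeg
  have hbound : ∀ (i : Fin n), ∀ s ∈ (jacMinor f i).support,
      Finsupp.weight w s < w i + w ⟨0, by omega⟩ - w ⟨n - 2, by omega⟩ := by
    intro i s hs
    have hk := hkey i s hs
    have hsum : ∑ j ∈ Finset.univ.erase i, w j + w i = ∑ j, w j :=
      Finset.sum_erase_add _ _ (Finset.mem_univ i)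
    have h5 : Finsupp.weight w s + ∑ j ∈ Finset.univ.erase i, w j <
        (w i + w ⟨0, by omega⟩ - w ⟨n - 2, by omega⟩) + ∑ j ∈ Finset.univ.erase i, w j :=
      lt_of_lt_of_le hk (hub.trans (le_of_eq (by rw [← hsum]; abel)))
    exact lt_of_add_lt_add_right h5
  have hzp : w ⟨0, by omega⟩ ≤ w ⟨n - 2, by omega⟩ :=
    hmono _ _ (Fin.le_def.mpr (show (0 : ℕ) ≤ n - 2 from Nat.zero_le _))
  have hlastzero : ∀ s ∈ (jacMinor f ⟨n - 1, by omega⟩).support,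
      s ⟨n - 1, by omega⟩ = 0 := by
    intro s hs
    by_contra hne
    have h2 : w ⟨n - 1, by omega⟩ ≤ Finsupp.weight w s := LemHiAux.le_weight w hw hne
    have h3 := hbound ⟨n - 1, by omega⟩ s hs
    have h4 : w ⟨n - 1, by omega⟩ + w ⟨0, by omega⟩ - w ⟨n - 2, by omega⟩ ≤
        w ⟨n - 1, by omega⟩ := by
      have h := sub_le_sub_right (add_le_add_right hzp (w ⟨n - 1, by omega⟩))
        (w ⟨n - 2, by omega⟩)
      rwa [add_sub_cancel_right] at h
    exact absurd (lt_of_lt_of_le h3 h4) (not_lt.mpr h2)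
  refine ⟨?_, ?_, ?_⟩
  · intro i hi
    have hzero : ∀ s ∈ (jacMinor f i).support, s = 0 := by
      intro s hs
      by_contra hne
      obtain ⟨j, hj⟩ := Finsupp.support_nonempty_iff.mpr hne
      have hj' : s j ≠ 0 := Finsupp.mem_support_iff.mp hj
      have h1 : w ⟨0, by omega⟩ ≤ w j :=
        hmono _ j (Fin.le_def.mpr (show (0 : ℕ) ≤ j.val from Nat.zero_le _))
      have h2 : w j ≤ Finsupp.weight w s := LemHiAux.le_weight w hw hj'
      have h3 := hbound i s hs
      have hip : w i ≤ w ⟨n - 2, by omega⟩ :=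
        hmono i _ (Fin.le_def.mpr (show i.val ≤ n - 2 by omega))
      have h4 : w i + w ⟨0, by omega⟩ - w ⟨n - 2, by omega⟩ ≤ w ⟨0, by omega⟩ := by
        have h := sub_le_sub_right (add_le_add_left hip (w ⟨0, by omega⟩))
          (w ⟨n - 2, by omega⟩)
        rwa [add_sub_cancel_left] at h
      exact absurd (lt_of_lt_of_le h3 h4) (not_lt.mpr (h1.trans h2))
    refine ⟨coeff 0 (jacMinor f i), MvPolynomial.ext _ _ fun m => ?_⟩
    by_cases hm : m = 0
    · subst hm; simp
    · rw [MvPolynomial.coeff_C, if_neg (fun h => hm h.symm)]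
      by_contra hne
      exact hm (hzero m (MvPolynomial.mem_support_iff.mpr hne))
  · rw [MvPolynomial.mem_supported]
    intro j hj
    obtain ⟨d, hd, hjd⟩ := (MvPolynomial.mem_vars _).mp (Finset.mem_coe.mp hj)
    simp only [Set.mem_compl_iff, Set.mem_singleton_iff]
    rintro rfl
    exact Finsupp.mem_support_iff.mp hjd (hlastzero d hd)
  · refine Finset.sup_le fun s hs => ?_
    rw [WithBot.coe_le_coe]
    show Finsupp.weight w s ≤ w ⟨n - 1, by omega⟩ - w ⟨n - 2, by omega⟩
    by_contra hgt
    push_neg at hgt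
    have hsz := hlastzero s hs
    have hγlt := hkey ⟨n - 1, by omega⟩ s hs
    have hEs : ∑ j ∈ Finset.univ.erase (⟨n - 1, by omega⟩ : Fin n), w j
        + w ⟨n - 1, by omega⟩ = ∑ j, w j :=
      Finset.sum_erase_add _ _ (Finset.mem_univ _)
    have hlv : ((⟨n - 1, by omega⟩ : Fin n)).val = n - 1 := rfl
    have hmemS : (Finsupp.weight w s
        + ∑ j ∈ Finset.univ.erase (⟨n - 1, by omega⟩ : Fin n), w j) ∈
        {γ : Γ | (∃ u : Fin n → ℕ, (∀ i : Fin n,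
            (i.val < n - 1 → 0 < u i) ∧ (¬ i.val < n - 1 → u i = 0)) ∧
          γ = ∑ i, u i • w i) ∧
        (∑ i, w i) - w ⟨n - 2, by omega⟩ < γ} := by
      constructor
      · refine ⟨fun i => s i + (if i = ⟨n - 1, by omega⟩ then 0 else 1),
          fun i => ⟨?_, ?_⟩, ?_⟩
        · intro hi
          have hne : i ≠ ⟨n - 1, by omega⟩ := by
            intro h
            rw [h] at hi
            rw [hlv] at hi
            omega
          simp [hne]
        · intro hi
          have hieq : i = ⟨n - 1, by omega⟩ := Fin.ext (by have := i.isLt; omega)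
          simp [hieq, hsz]
        · exact LemHiAux.weight_split w s _
      · have h1 : (w ⟨n - 1, by omega⟩ - w ⟨n - 2, by omega⟩)
            + ∑ j ∈ Finset.univ.erase (⟨n - 1, by omega⟩ : Fin n), w j
            < Finsupp.weight w s
            + ∑ j ∈ Finset.univ.erase (⟨n - 1, by omega⟩ : Fin n), w j :=
          add_lt_add_left hgt _
        have h2 : (∑ i, w i) - w ⟨n - 2, by omega⟩
            = (w ⟨n - 1, by omega⟩ - w ⟨n - 2, by omega⟩)
            + ∑ j ∈ Finset.univ.erase (⟨n - 1, by omega⟩ : Fin n), w j := by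
          rw [← hEs]; abel
        rw [h2]
        exact h1
    exact absurd hγlt (not_lt.mpr (hstar.2 (Set.mem_union_left _ hmemS)))
end
end

section
/- Let d_1 ≤ d_2 ≤ d_3 be positive integers such that d_1 does not divide d_2 and d_3 ∉ {u·d_1 + v·d_2 : u, v nonnegative integers}. Set d_i' = d_i / gcd(d_1,d_2,d_3) for i = 1,2,3. If one of the following conditions holds: (1) d_1' is odd, and d_2' is odd or d_3' is not divisible by 3; (2) d_1 ≠ 2·gcd(d_1,d_3) and d_2' is odd; (3) d_1' is divisible by 2^l for some l ≥ 2, and d_2' and d_3' are odd; (4) d_3 is a prime number; (5) d_3 − d_2 ≥ d_1 − 2; (6) d_1' is odd, and 3·d_2 ≠ 2·d_3 or 2·d_1 ≤ d_2 + 5; then either (a1) 3·d_2 ≠ 2·d_3 and s·d_1 ≠ 2·d_3 for every odd integer s ≥ 3, or (a2) d_1 + d_2 ≤ d_3 + 2. -/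
/-- Lemma `lem:a total`: if `d1 ≤ d2 ≤ d3` satisfy (c) and one of conditions
(1)–(6), then condition (a) holds, where `d_i' = d_i / gcd(d1,d2,d3)`. -/
theorem lem_a_total (d1 d2 d3 : ℕ) (h1 : 0 < d1) (h12 : d1 ≤ d2) (h23 : d2 ≤ d3)
    (hc1 : ¬ d1 ∣ d2) (hc2 : ¬ ∃ u v : ℕ, d3 = u * d1 + v * d2)
    (hcond :
      (Odd (d1 / Nat.gcd (Nat.gcd d1 d2) d3) ∧
        (Odd (d2 / Nat.gcd (Nat.gcd d1 d2) d3) ∨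
          ¬ 3 ∣ d3 / Nat.gcd (Nat.gcd d1 d2) d3)) ∨
      (d1 ≠ 2 * Nat.gcd d1 d3 ∧ Odd (d2 / Nat.gcd (Nat.gcd d1 d2) d3)) ∨
      ((∃ l : ℕ, 2 ≤ l ∧ 2 ^ l ∣ d1 / Nat.gcd (Nat.gcd d1 d2) d3) ∧
        Odd (d2 / Nat.gcd (Nat.gcd d1 d2) d3) ∧
        Odd (d3 / Nat.gcd (Nat.gcd d1 d2) d3)) ∨
      Nat.Prime d3 ∨
      ((d1 : ℤ) - 2 ≤ (d3 : ℤ) - (d2 : ℤ)) ∨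
      (Odd (d1 / Nat.gcd (Nat.gcd d1 d2) d3) ∧
        (3 * d2 ≠ 2 * d3 ∨ 2 * d1 ≤ d2 + 5))) :
    (3 * d2 ≠ 2 * d3 ∧ ∀ s : ℕ, Odd s → 3 ≤ s → s * d1 ≠ 2 * d3) ∨
      d1 + d2 ≤ d3 + 2 := by
  by_cases ha2 : d1 + d2 ≤ d3 + 2
  · exact Or.inr ha2
  left
  set g := Nat.gcd (Nat.gcd d1 d2) d3 with hg
  have hgd1 : g ∣ d1 := dvd_trans (Nat.gcd_dvd_left _ _) (Nat.gcd_dvd_left _ _)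
  have hgd2 : g ∣ d2 := dvd_trans (Nat.gcd_dvd_left _ _) (Nat.gcd_dvd_right _ _)
  have hgd3 : g ∣ d3 := Nat.gcd_dvd_right _ _
  have hgpos : 0 < g := Nat.pos_of_dvd_of_pos hgd1 h1
  obtain ⟨e1, he1⟩ := hgd1
  obtain ⟨e2, he2⟩ := hgd2
  obtain ⟨e3, he3⟩ := hgd3
  have hq1 : d1 / g = e1 := by rw [he1, Nat.mul_div_cancel_left _ hgpos]
  have hq2 : d2 / g = e2 := by rw [he2, Nat.mul_div_cancel_left _ hgpos]
  have hq3 : d3 / g = e3 := by rw [he3, Nat.mul_div_cancel_left _ hgpos]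
  rw [hq1, hq2, hq3] at hcond
  constructor
  · -- 3 * d2 ≠ 2 * d3
    intro hA
    have h32 : 3 * e2 = 2 * e3 := by
      apply Nat.eq_of_mul_eq_mul_left hgpos
      rw [he2, he3] at hA
      ring_nf at hA ⊢
      linarith
    rcases hcond with ⟨hodd1, h⟩ | ⟨hne, hodd2⟩ | ⟨_, hodd2, _⟩ | hp | h5 | ⟨hodd1, h6⟩
    · rcases h with h | h
      · rw [Nat.odd_iff] at h; omega
      · exact h (by omega)
    · rw [Nat.odd_iff] at hodd2; omega
    · rw [Nat.odd_iff] at hodd2; omega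
    · have h3d3 : 3 ∣ d3 := by omega
      have : 3 = d3 := (Nat.prime_dvd_prime_iff_eq (by norm_num) hp).mp h3d3
      have hd2 : d2 = 2 := by omega
      apply hc1
      have : d1 = 1 ∨ d1 = 2 := by omega
      rcases this with h | h <;> simp [h, hd2]
    · exact ha2 (by omega)
    · rcases h6 with h | h
      · exact h hA
      · exact ha2 (by omega)
  · -- ∀ s, Odd s → 3 ≤ s → s * d1 ≠ 2 * d3
    intro s hodds h3s heq
    have heq' : s * e1 = 2 * e3 := by
      apply Nat.eq_of_mul_eq_mul_left hgpos
      rw [he1, he3] at heq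
      ring_nf at heq ⊢
      linarith
    have h2e1 : 2 ∣ e1 := by
      rcases Nat.even_or_odd e1 with h | h
      · obtain ⟨r, hr⟩ := h; exact ⟨r, by omega⟩
      · exfalso
        have hso := hodds.mul h
        rw [heq', Nat.odd_iff] at hso
        omega
    have h2d1 : 2 ∣ d1 := he1 ▸ (h2e1.mul_left g)
    obtain ⟨m, hm⟩ := h2d1
    have hd3m : d3 = s * m := by
      apply Nat.eq_of_mul_eq_mul_left (show 0 < 2 by norm_num)
      rw [← heq, hm]; ring
    rcases hcond with ⟨hodd1, _⟩ | ⟨hne, _⟩ | ⟨⟨l, hl, hdvd⟩, _, hodd3⟩ | hp | h5 | ⟨hodd1, _⟩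
    · rw [Nat.odd_iff] at hodd1; omega
    · apply hne
      have hcop : Nat.gcd 2 s = 1 := by
        have hs1 : s % 2 = 1 := Nat.odd_iff.mp hodds
        rw [Nat.gcd_rec, hs1]
        simp
      rw [hm, hd3m, Nat.gcd_mul_right, hcop, one_mul]
    · have h4 : (4 : ℕ) ∣ e1 := by
        have : (2:ℕ)^2 ∣ 2^l := pow_dvd_pow 2 hl
        calc (4:ℕ) = 2^2 := by norm_num
        _ ∣ 2^l := this
        _ ∣ e1 := hdvd
      obtain ⟨k, hk⟩ := h4
      have he3eq : e3 = 2 * (s * k) := by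
        apply Nat.eq_of_mul_eq_mul_left (show 0 < 2 by norm_num)
        rw [← heq', hk]; ring
      rw [he3eq] at hodd3
      exact Nat.not_odd_iff_even.mpr ⟨s * k, by ring⟩ hodd3
    · have hmd : m ∣ d3 := ⟨s, by rw [hd3m]; ring⟩
      rcases hp.eq_one_or_self_of_dvd m hmd with h1m | hmm
      · rw [h1m] at hd3m hm
        have hd1 : d1 = 2 := by omega
        rw [hd1] at hc1
        have hsodd : s % 2 = 1 := Nat.odd_iff.mp hodds
        exact hc2 ⟨(d3 - d2) / 2, 1, by omega⟩
      · rw [hmm] at hd3m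
        have h3 : 3 * d3 ≤ s * d3 := Nat.mul_le_mul_right d3 h3s
        rw [← hd3m] at h3
        have := hp.two_le
        omega
    · exact ha2 (by omega)
    · rw [Nat.odd_iff] at hodd1; omega
end
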